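/- Let n ≥ 1, let c > 0 be real, let R be an (n,n) real orthogonal matrix (RᵀR = I_n), and let λ ∈ ℝⁿ with Λ = diag(λ). Let Σ = c · D_n⁺ M_n D_n⁺ᵀ (an invertible (n(n+1)/2, n(n+1)/2) matrix), let Σ̃ = c(2 I_n + 1_n 1_nᵀ) where 1_n is the all-ones vector, and let h = vech(Rᵀ Λ R). Then hᵀ Σ⁻¹ h = λᵀ Σ̃⁻¹ λ = (1/(2c)) [ ∑_{i=1}^n λ_i² − (∑_{i=1}^n λ_i)²/(n+2) ]. -/

import Mathlib

open Matrix

def vecM {n : ℕ} (T : Matrix (Fin n) (Fin n) ℝ) : Fin n × Fin n → ℝ :=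
  fun p => T p.1 p.2
def commMat (n : ℕ) : Matrix (Fin n × Fin n) (Fin n × Fin n) ℝ :=
  Matrix.of fun p q => if p.1 = q.2 ∧ p.2 = q.1 then 1 else 0
def Mmat (n : ℕ) : Matrix (Fin n × Fin n) (Fin n × Fin n) ℝ :=
  1 + commMat n + Matrix.vecMulVec (vecM (1 : Matrix (Fin n) (Fin n) ℝ))
    (vecM (1 : Matrix (Fin n) (Fin n) ℝ))
abbrev SymIdx (n : ℕ) := {p : Fin n × Fin n // p.2 ≤ p.1}
def vechM {n : ℕ} (S : Matrix (Fin n) (Fin n) ℝ) : SymIdx n → ℝ :=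
  fun q => S q.1.1 q.1.2
def dupMat (n : ℕ) : Matrix (Fin n × Fin n) (SymIdx n) ℝ :=
  Matrix.of fun p q => if p = q.1 ∨ p = (q.1.2, q.1.1) then 1 else 0
noncomputable def dupPinv (n : ℕ) : Matrix (SymIdx n) (Fin n × Fin n) ℝ :=
  ((dupMat n)ᵀ * dupMat n)⁻¹ * (dupMat n)ᵀ

namespace QFE
variable {n : ℕ}

def dvec (n : ℕ) : SymIdx n → ℝ := fun q => if q.1.1 = q.1.2 then 1 else 2
def uvec (n : ℕ) : SymIdx n → ℝ := fun q => if q.1.1 = q.1.2 then 1 else 0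

lemma ite_mul_ite (P Q : Prop) [Decidable P] [Decidable Q] :
    (if P then (1:ℝ) else 0) * (if Q then 1 else 0) = if P ∧ Q then 1 else 0 := by
  by_cases hP : P <;> by_cases hQ : Q <;> simp [hP, hQ]

lemma eq_of_mem {q q' : SymIdx n} {p : Fin n × Fin n}
    (h1 : p = q.1 ∨ p = (q.1.2, q.1.1)) (h2 : p = q'.1 ∨ p = (q'.1.2, q'.1.1)) : q = q' := by
  apply Subtype.ext
  obtain ⟨⟨i, j⟩, hij⟩ := q; obtain ⟨⟨k, l⟩, hkl⟩ := q'
  simp only at h1 h2 hij hkl ⊢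
  rcases h1 with rfl | rfl
  · rcases h2 with h | h
    · exact h
    · obtain ⟨rfl, rfl⟩ := Prod.mk.injEq .. ▸ (Prod.mk.inj h)
      have := le_antisymm hij hkl; subst this; rfl
  · rcases h2 with h | h
    · obtain ⟨rfl, rfl⟩ := Prod.mk.injEq .. ▸ (Prod.mk.inj h)
      have := le_antisymm hij hkl; subst this; rfl
    · obtain ⟨rfl, rfl⟩ := Prod.mk.injEq .. ▸ (Prod.mk.inj h)
      rfl

lemma DtD : (dupMat n)ᵀ * dupMat n = Matrix.diagonal (dvec n) := by
  ext q q'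
  simp only [Matrix.mul_apply, Matrix.transpose_apply, dupMat, Matrix.of_apply, ite_mul_ite]
  by_cases hqq : q = q'
  · subst hqq
    simp only [Matrix.diagonal_apply_eq, dvec, and_self]
    by_cases hd : q.1.1 = q.1.2
    · have hswap : (q.1.2, q.1.1) = q.1 := by
        obtain ⟨⟨i, j⟩, _⟩ := q; simp only at hd ⊢; rw [hd]
      have hcond : ∀ p : Fin n × Fin n, (p = q.1 ∨ p = (q.1.2, q.1.1)) = (p = q.1) :=
        fun p => by rw [hswap, or_self]
      simp only [hcond, and_self]
      simp [hd]
    · have hne : q.1 ≠ (q.1.2, q.1.1) := by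
        intro h; exact hd (congrArg Prod.fst h ▸ (congrArg Prod.snd h) ▸ rfl)
      have : ∀ p : Fin n × Fin n, (if p = q.1 ∨ p = (q.1.2, q.1.1) then (1:ℝ) else 0)
          = (if p = q.1 then 1 else 0) + (if p = (q.1.2, q.1.1) then 1 else 0) := by
        intro p
        by_cases h1 : p = q.1 <;> by_cases h2 : p = (q.1.2, q.1.1) <;>
          simp_all
      rw [Finset.sum_congr rfl fun p _ => this p, Finset.sum_add_distrib]
      simp only [Finset.sum_ite_eq' Finset.univ, Finset.mem_univ, if_true, hd, if_false]
      norm_num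
  · rw [Matrix.diagonal_apply_ne _ hqq]
    apply Finset.sum_eq_zero
    intro p _
    rw [if_neg]
    rintro ⟨h1, h2⟩
    exact hqq (eq_of_mem h1 h2)

lemma dvec_ne_zero (q : SymIdx n) : dvec n q ≠ 0 := by
  unfold dvec; split <;> norm_num

noncomputable def dinv (n : ℕ) : SymIdx n → ℝ := fun q => (dvec n q)⁻¹

lemma DtD_inv : ((dupMat n)ᵀ * dupMat n)⁻¹ = Matrix.diagonal (dinv n) := by
  rw [DtD]
  apply Matrix.inv_eq_right_inv
  rw [Matrix.diagonal_mul_diagonal,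
    show (fun q => dvec n q * dinv n q) = fun _ => (1:ℝ) from
      funext fun q => mul_inv_cancel₀ (dvec_ne_zero q), Matrix.diagonal_one]

lemma sum_diag (f : Fin n → Fin n → ℝ) :
    ∑ q : SymIdx n, (if q.1.1 = q.1.2 then f q.1.1 q.1.2 else 0) = ∑ i, f i i := by
  rw [← Finset.sum_filter]
  apply Finset.sum_nbij' (fun q => q.1.1) (fun i => (⟨(i, i), le_rfl⟩ : SymIdx n))
  · intro a _; exact Finset.mem_univ _
  · intro i _; simp
  · intro q hq
    simp only [Finset.mem_filter] at hq
    apply Subtype.ext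
    obtain ⟨⟨i, j⟩, _⟩ := q
    simp only at hq ⊢
    rw [hq.2]
  · intro i _; rfl
  · intro q hq
    simp only [Finset.mem_filter] at hq
    obtain ⟨⟨i, j⟩, _⟩ := q
    simp only at hq ⊢
    rw [hq.2]

lemma sum_sym (f : Fin n → Fin n → ℝ) (hf : ∀ i j, f i j = f j i) :
    ∑ q : SymIdx n, dvec n q * f q.1.1 q.1.2 = ∑ i, ∑ j, f i j := by
  have e1 := Finset.sum_subtype (p := fun p : Fin n × Fin n => p.2 ≤ p.1)
    (F := (inferInstance : Fintype (SymIdx n)))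
    (Finset.univ.filter (fun p : Fin n × Fin n => p.2 ≤ p.1)) (fun p => by simp)
    (fun p => (if p.1 = p.2 then (1:ℝ) else 2) * f p.1 p.2)
  simp only [dvec]
  rw [← e1]
  have e2 : ∑ i, ∑ j, f i j = ∑ p : Fin n × Fin n, f p.1 p.2 := by
    rw [Fintype.sum_prod_type]
  rw [e2, ← Finset.sum_filter_add_sum_filter_not Finset.univ (fun p : Fin n × Fin n => p.2 ≤ p.1)]
  have e3 : ∑ p ∈ Finset.univ.filter (fun p : Fin n × Fin n => ¬ p.2 ≤ p.1), f p.1 p.2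
      = ∑ p ∈ Finset.univ.filter (fun p : Fin n × Fin n => p.2 ≤ p.1 ∧ p.2 ≠ p.1), f p.1 p.2 := by
    apply Finset.sum_nbij' (fun p => (p.2, p.1)) (fun p => (p.2, p.1))
    · intro p hp
      simp only [Finset.mem_filter, Finset.mem_univ, true_and, not_le] at hp ⊢
      exact ⟨le_of_lt hp, ne_of_lt hp⟩
    · intro p hp
      simp only [Finset.mem_filter, Finset.mem_univ, true_and, not_le] at hp ⊢
      exact lt_of_le_of_ne hp.1 hp.2
    · intro p _; rfl
    · intro p _; rfl
    · intro p _; exact hf p.1 p.2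
  rw [e3]
  have e4 : ∀ p ∈ Finset.univ.filter (fun p : Fin n × Fin n => p.2 ≤ p.1),
      (if p.1 = p.2 then (1:ℝ) else 2) * f p.1 p.2
        = f p.1 p.2 + (if p.2 ≠ p.1 then f p.1 p.2 else 0) := by
    intro p _
    by_cases h : p.1 = p.2 <;> simp [h, Ne, eq_comm] <;> try ring
  rw [Finset.sum_congr rfl e4, Finset.sum_add_distrib, ← Finset.sum_filter, Finset.filter_filter]

lemma mul_vecMulVec_mul {α β γ : Type*} [Fintype β] [Fintype α] [Fintype γ]
    (A : Matrix α β ℝ) (a b : β → ℝ) (B : Matrix β γ ℝ) :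
    A * Matrix.vecMulVec a b * B = Matrix.vecMulVec (A.mulVec a) (Matrix.vecMul b B) := by
  ext x y
  simp only [Matrix.mul_apply, Matrix.vecMulVec_apply, Matrix.mulVec, Matrix.vecMul,
    dotProduct, Finset.sum_mul, Finset.mul_sum]
  apply Finset.sum_congr rfl; intro i _
  apply Finset.sum_congr rfl; intro j _
  ring

lemma diagonal_mul_vecMulVec (d a b : SymIdx n → ℝ) :
    Matrix.diagonal d * Matrix.vecMulVec a b = Matrix.vecMulVec (fun q => d q * a q) b := by
  ext x y
  simp [Matrix.mul_apply, Matrix.vecMulVec_apply, Matrix.diagonal_apply, ite_mul, mul_assoc]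

lemma vecMulVec_mul_diagonal (d a b : SymIdx n → ℝ) :
    Matrix.vecMulVec a b * Matrix.diagonal d = Matrix.vecMulVec a (fun q => b q * d q) := by
  ext x y
  simp [Matrix.mul_apply, Matrix.vecMulVec_apply, Matrix.diagonal_apply, mul_ite, mul_assoc]

lemma vecMulVec_mul_vecMulVec' {m : Type*} [Fintype m] (a b u v : m → ℝ) :
    Matrix.vecMulVec a b * Matrix.vecMulVec u v
      = (dotProduct b u) • Matrix.vecMulVec a v := by
  ext x y
  simp only [Matrix.mul_apply, Matrix.vecMulVec_apply, Matrix.smul_apply, dotProduct,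
    smul_eq_mul, Finset.sum_mul]
  apply Finset.sum_congr rfl; intro q _; ring

lemma vecMulVec_mul_vecMulVec (a b u v : SymIdx n → ℝ) :
    Matrix.vecMulVec a b * Matrix.vecMulVec u v
      = (dotProduct b u) • Matrix.vecMulVec a v := by
  ext x y
  simp only [Matrix.mul_apply, Matrix.vecMulVec_apply, Matrix.smul_apply, dotProduct,
    smul_eq_mul, Finset.sum_mul]
  apply Finset.sum_congr rfl; intro q _; ring

lemma vecMulVec_mulVec {m : Type*} [Fintype m] (a b v : m → ℝ) :
    (Matrix.vecMulVec a b).mulVec v = (dotProduct b v) • a := by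
  ext x
  simp only [Matrix.mulVec, Matrix.vecMulVec_apply, dotProduct, Pi.smul_apply,
    smul_eq_mul, Finset.sum_mul]
  apply Finset.sum_congr rfl; intro q _; ring

lemma commMat_mul_dup : commMat n * dupMat n = dupMat n := by
  ext p q
  simp only [Matrix.mul_apply, commMat, dupMat, Matrix.of_apply]
  rw [Finset.sum_eq_single (p.2, p.1)]
  · simp only [and_self, if_true]
    rw [one_mul]
    congr 1
    simp only [eq_iff_iff, Prod.ext_iff]
    constructor
    · rintro (⟨h1, h2⟩ | ⟨h1, h2⟩)
      · exact Or.inr ⟨h2, h1⟩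
      · exact Or.inl ⟨h2, h1⟩
    · rintro (⟨h1, h2⟩ | ⟨h1, h2⟩)
      · exact Or.inr ⟨h2, h1⟩
      · exact Or.inl ⟨h2, h1⟩
  · intro r _ hr
    rw [if_neg, zero_mul]
    rintro ⟨h1, h2⟩
    exact hr (Prod.ext h2.symm h1.symm)
  · intro h; exact absurd (Finset.mem_univ _) h

lemma vecM_one (p : Fin n × Fin n) : vecM 1 p = if p.1 = p.2 then 1 else 0 := by
  simp [vecM, Matrix.one_apply]

lemma Dt_mulVec_one : (dupMat n)ᵀ.mulVec (vecM 1) = uvec n := by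
  ext q
  simp only [Matrix.mulVec, dotProduct, Matrix.transpose_apply, dupMat, Matrix.of_apply,
    vecM_one, uvec, ite_mul_ite]
  by_cases hd : q.1.1 = q.1.2
  · have hswap : (q.1.2, q.1.1) = q.1 := by
      obtain ⟨⟨i, j⟩, _⟩ := q; simp only at hd ⊢; rw [hd]
    rw [if_pos hd]
    rw [Finset.sum_eq_single q.1]
    · simp [hd]
    · intro r _ hr
      rw [if_neg]
      rintro ⟨h1 | h1, _⟩
      · exact hr h1
      · exact hr (h1.trans hswap)
    · intro h; exact absurd (Finset.mem_univ _) h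
  · rw [if_neg hd]
    apply Finset.sum_eq_zero
    intro p _
    rw [if_neg]
    rintro ⟨h1 | h1, h2⟩
    · subst h1; exact hd h2
    · subst h1; exact hd h2.symm

lemma one_vecMul_D : Matrix.vecMul (vecM 1) (dupMat n) = uvec n := by
  ext q
  have := congrFun (Dt_mulVec_one (n := n)) q
  rw [← this]
  simp only [Matrix.mulVec, Matrix.vecMul, dotProduct, Matrix.transpose_apply]
  apply Finset.sum_congr rfl; intro p _; ring

lemma DtMD : (dupMat n)ᵀ * Mmat n * dupMat n
    = (2:ℝ) • Matrix.diagonal (dvec n) + Matrix.vecMulVec (uvec n) (uvec n) := by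
  unfold Mmat
  rw [Matrix.mul_add, Matrix.add_mul, Matrix.mul_add, Matrix.add_mul, Matrix.mul_one]
  rw [Matrix.mul_assoc ((dupMat n)ᵀ) (commMat n) (dupMat n), commMat_mul_dup]
  rw [mul_vecMulVec_mul, Dt_mulVec_one, one_vecMul_D, DtD, two_smul]

lemma dinv_dvec (q : SymIdx n) : dinv n q * dvec n q = 1 :=
  inv_mul_cancel₀ (dvec_ne_zero q)

lemma dinv_uvec (q : SymIdx n) : dinv n q * uvec n q = uvec n q := by
  unfold dinv dvec uvec; split <;> simp

lemma uvec_dvec (q : SymIdx n) : uvec n q * dvec n q = uvec n q := by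
  unfold dvec uvec; split <;> simp

lemma uvec_dot_uvec : dotProduct (uvec n) (uvec n) = (n : ℝ) := by
  unfold dotProduct
  have : ∀ q : SymIdx n, uvec n q * uvec n q = if q.1.1 = q.1.2 then (1:ℝ) else 0 := by
    intro q; unfold uvec; split <;> simp
  rw [Finset.sum_congr rfl fun q _ => this q, sum_diag (fun _ _ => (1:ℝ))]
  simp

lemma Sigma_eq (c : ℝ) :
    c • (dupPinv n * Mmat n * (dupPinv n)ᵀ)
      = c • ((2:ℝ) • Matrix.diagonal (dinv n) + Matrix.vecMulVec (uvec n) (uvec n)) := by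
  congr 1
  unfold dupPinv
  rw [DtD_inv, Matrix.transpose_mul, Matrix.transpose_transpose, Matrix.diagonal_transpose]
  have assoc : Matrix.diagonal (dinv n) * (dupMat n)ᵀ * Mmat n * (dupMat n * Matrix.diagonal (dinv n))
      = Matrix.diagonal (dinv n) * ((dupMat n)ᵀ * Mmat n * dupMat n) * Matrix.diagonal (dinv n) := by
    simp only [Matrix.mul_assoc]
  rw [assoc, DtMD, Matrix.mul_add, Matrix.add_mul]
  congr 1
  · rw [Matrix.mul_smul, Matrix.smul_mul, Matrix.diagonal_mul_diagonal,
      Matrix.diagonal_mul_diagonal]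
    rw [show (fun i => dinv n i * dvec n i * dinv n i) = dinv n from
      funext fun q => by rw [dinv_dvec, one_mul]]
  · rw [diagonal_mul_vecMulVec, vecMulVec_mul_diagonal,
      show (fun q => dinv n q * uvec n q) = uvec n from funext fun q => dinv_uvec q,
      show (fun q => uvec n q * dinv n q) = uvec n from
        funext fun q => by rw [mul_comm]; exact dinv_uvec q]

lemma Sigma_inv (c : ℝ) (hc : c ≠ 0) :
    (c • ((2:ℝ) • Matrix.diagonal (dinv n) + Matrix.vecMulVec (uvec n) (uvec n)))⁻¹
      = (1/(2*c)) • (Matrix.diagonal (dvec n)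
          - (((n:ℝ)+2)⁻¹) • Matrix.vecMulVec (uvec n) (uvec n)) := by
  have hn2 : ((n:ℝ)+2) ≠ 0 := by positivity
  apply Matrix.inv_eq_right_inv
  rw [Matrix.smul_mul, Matrix.mul_smul, smul_smul]
  rw [Matrix.add_mul, Matrix.mul_sub, Matrix.mul_sub, Matrix.smul_mul, Matrix.smul_mul,
    Matrix.mul_smul, Matrix.mul_smul, Matrix.diagonal_mul_diagonal,
    diagonal_mul_vecMulVec, vecMulVec_mul_diagonal, vecMulVec_mul_vecMulVec, uvec_dot_uvec]
  rw [show (fun q => dinv n q * dvec n q) = fun _ => (1:ℝ) from funext fun q => dinv_dvec q,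
    Matrix.diagonal_one,
    show (fun q => dinv n q * uvec n q) = uvec n from funext fun q => dinv_uvec q,
    show (fun q => uvec n q * dvec n q) = uvec n from funext fun q => uvec_dvec q]
  match_scalars
  · field_simp
    try ring
  · field_simp
    try ring

lemma ones_dot_ones : dotProduct (fun _ : Fin n => (1:ℝ)) (fun _ => (1:ℝ)) = (n:ℝ) := by
  simp [dotProduct]

lemma SigmaTilde_inv (c : ℝ) (hc : c ≠ 0) :
    (c • ((2 : ℝ) • (1 : Matrix (Fin n) (Fin n) ℝ) +
        Matrix.vecMulVec (fun _ => (1 : ℝ)) (fun _ => (1 : ℝ))))⁻¹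
      = (1/(2*c)) • ((1 : Matrix (Fin n) (Fin n) ℝ)
          - (((n:ℝ)+2)⁻¹) • Matrix.vecMulVec (fun _ => (1:ℝ)) (fun _ => (1:ℝ))) := by
  have hn2 : ((n:ℝ)+2) ≠ 0 := by positivity
  apply Matrix.inv_eq_right_inv
  rw [Matrix.smul_mul, Matrix.mul_smul, smul_smul]
  rw [Matrix.add_mul, Matrix.mul_sub, Matrix.mul_sub, Matrix.smul_mul, Matrix.smul_mul,
    Matrix.mul_smul, Matrix.mul_smul, Matrix.mul_one, Matrix.one_mul, Matrix.mul_one,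
    vecMulVec_mul_vecMulVec', ones_dot_ones]
  match_scalars
  · field_simp
    try ring
  · field_simp
    try ring

lemma S_symm (R : Matrix (Fin n) (Fin n) ℝ) (lam : Fin n → ℝ) (hR : Rᵀ * R = 1) :
    (Rᵀ * Matrix.diagonal lam * R)ᵀ = Rᵀ * Matrix.diagonal lam * R := by
  rw [Matrix.transpose_mul, Matrix.transpose_mul, Matrix.transpose_transpose,
    Matrix.diagonal_transpose, Matrix.mul_assoc]

lemma trace_S (R : Matrix (Fin n) (Fin n) ℝ) (lam : Fin n → ℝ) (hR : Rᵀ * R = 1) :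
    ∑ i, (Rᵀ * Matrix.diagonal lam * R) i i = ∑ i, lam i := by
  have h1 : (Rᵀ * Matrix.diagonal lam * R).trace = ∑ i, lam i := by
    rw [Matrix.trace_mul_cycle, mul_eq_one_comm.mp hR,
      Matrix.one_mul, Matrix.trace_diagonal]
  rw [← h1]
  rfl

lemma sumsq_S (R : Matrix (Fin n) (Fin n) ℝ) (lam : Fin n → ℝ) (hR : Rᵀ * R = 1) :
    ∑ i, ∑ j, (Rᵀ * Matrix.diagonal lam * R) i j * (Rᵀ * Matrix.diagonal lam * R) i j
      = ∑ i, lam i * lam i := by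
  set S := Rᵀ * Matrix.diagonal lam * R with hS
  have hsym := S_symm R lam hR
  have h2 : S * S = Rᵀ * Matrix.diagonal (fun i => lam i * lam i) * R := by
    rw [hS]
    calc (Rᵀ * Matrix.diagonal lam * R) * (Rᵀ * Matrix.diagonal lam * R)
        = Rᵀ * (Matrix.diagonal lam * ((R * Rᵀ) * (Matrix.diagonal lam * R))) := by
          simp only [Matrix.mul_assoc]
      _ = Rᵀ * Matrix.diagonal (fun i => lam i * lam i) * R := by
          rw [mul_eq_one_comm.mp hR, Matrix.one_mul,
            ← Matrix.diagonal_mul_diagonal lam lam]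
          simp only [Matrix.mul_assoc]
  have h3 : (S * S).trace = ∑ i, lam i * lam i := by
    rw [h2, Matrix.trace_mul_cycle, mul_eq_one_comm.mp hR,
      Matrix.one_mul, Matrix.trace_diagonal]
  have h4 : (S * S).trace = ∑ i, ∑ j, S i j * S i j := by
    simp only [Matrix.trace, Matrix.diag, Matrix.mul_apply]
    apply Finset.sum_congr rfl; intro i _
    apply Finset.sum_congr rfl; intro j _
    have hji : S j i = S i j := by rw [← Matrix.transpose_apply S i j, hsym]
    rw [hji]
  rw [← h4, h3]

lemma quad_Sigma (R : Matrix (Fin n) (Fin n) ℝ) (lam : Fin n → ℝ) (c : ℝ) (hc : c ≠ 0)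
    (hR : Rᵀ * R = 1) :
    dotProduct (vechM (Rᵀ * Matrix.diagonal lam * R))
      ((c • (dupPinv n * Mmat n * (dupPinv n)ᵀ))⁻¹.mulVec (vechM (Rᵀ * Matrix.diagonal lam * R)))
    = (1 / (2 * c)) * (∑ i, lam i ^ 2 - (∑ i, lam i) ^ 2 / ((n : ℝ) + 2)) := by
  rw [Sigma_eq, Sigma_inv _ hc]
  set S := Rᵀ * Matrix.diagonal lam * R with hS
  set h : SymIdx n → ℝ := vechM S with hh
  have hsym := S_symm R lam hR
  rw [Matrix.smul_mulVec, dotProduct_smul, Matrix.sub_mulVec,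
    dotProduct_sub, Matrix.smul_mulVec, dotProduct_smul,
    vecMulVec_mulVec, dotProduct_smul]
  have hd : dotProduct h ((Matrix.diagonal (dvec n)).mulVec h)
      = ∑ i, ∑ j, S i j * S i j := by
    unfold dotProduct
    have step : ∀ q : SymIdx n, h q * (Matrix.diagonal (dvec n)).mulVec h q
        = dvec n q * (S q.1.1 q.1.2 * S q.1.1 q.1.2) := by
      intro q
      rw [Matrix.mulVec_diagonal]
      show S q.1.1 q.1.2 * (dvec n q * S q.1.1 q.1.2) = _
      ring
    rw [Finset.sum_congr rfl fun q _ => step q]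
    apply sum_sym (fun i j => S i j * S i j)
    intro i j
    have hji : S j i = S i j := by rw [← Matrix.transpose_apply S i j, hsym]
    rw [hji]
  have hu : dotProduct (uvec n) h = ∑ i, lam i := by
    unfold dotProduct
    have step : ∀ q : SymIdx n, uvec n q * h q
        = if q.1.1 = q.1.2 then S q.1.1 q.1.2 else 0 := by
      intro q
      show uvec n q * S q.1.1 q.1.2 = _
      unfold uvec; split <;> simp
    rw [Finset.sum_congr rfl fun q _ => step q, sum_diag (fun i j => S i j)]
    exact trace_S R lam hR
  rw [hd, dotProduct_comm h (uvec n), hu, sumsq_S R lam hR]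
  have hsq : ∑ i, lam i * lam i = ∑ i, lam i ^ 2 := by
    apply Finset.sum_congr rfl; intro i _; ring
  rw [hsq]
  simp only [smul_eq_mul]
  have hn2 : ((n:ℝ)+2) ≠ 0 := by positivity
  field_simp

lemma quad_SigmaTilde (lam : Fin n → ℝ) (c : ℝ) (hc : c ≠ 0) :
    dotProduct lam
      ((c • ((2 : ℝ) • (1 : Matrix (Fin n) (Fin n) ℝ) +
        Matrix.vecMulVec (fun _ => (1 : ℝ)) (fun _ => (1 : ℝ))))⁻¹.mulVec lam)
    = (1 / (2 * c)) * (∑ i, lam i ^ 2 - (∑ i, lam i) ^ 2 / ((n : ℝ) + 2)) := by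
  rw [SigmaTilde_inv _ hc]
  rw [Matrix.smul_mulVec, dotProduct_smul, Matrix.sub_mulVec,
    dotProduct_sub, Matrix.smul_mulVec, dotProduct_smul,
    vecMulVec_mulVec, dotProduct_smul, Matrix.one_mulVec]
  have h1 : dotProduct lam lam = ∑ i, lam i ^ 2 := by
    unfold dotProduct
    apply Finset.sum_congr rfl; intro i _; ring
  have h2 : dotProduct (fun _ : Fin n => (1:ℝ)) lam = ∑ i, lam i := by
    simp [dotProduct]
  have h3 : dotProduct lam (fun _ : Fin n => (1:ℝ)) = ∑ i, lam i := by
    simp [dotProduct]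
  rw [h1, h2, h3]
  simp only [smul_eq_mul]
  have hn2 : ((n:ℝ)+2) ≠ 0 := by positivity
  field_simp

end QFE

theorem quadratic_form_eigenvalues (n : ℕ) (hn : 1 ≤ n) (c : ℝ) (hc : 0 < c)
    (R : Matrix (Fin n) (Fin n) ℝ) (hR : Rᵀ * R = 1) (lam : Fin n → ℝ) :
    let Sigma : Matrix (SymIdx n) (SymIdx n) ℝ :=
      c • (dupPinv n * Mmat n * (dupPinv n)ᵀ)
    let SigmaTilde : Matrix (Fin n) (Fin n) ℝ :=
      c • ((2 : ℝ) • (1 : Matrix (Fin n) (Fin n) ℝ) +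
        Matrix.vecMulVec (fun _ => (1 : ℝ)) (fun _ => (1 : ℝ)))
    let h : SymIdx n → ℝ := vechM (Rᵀ * Matrix.diagonal lam * R)
    h ⬝ᵥ Sigma⁻¹.mulVec h = lam ⬝ᵥ SigmaTilde⁻¹.mulVec lam ∧
    lam ⬝ᵥ SigmaTilde⁻¹.mulVec lam =
      (1 / (2 * c)) * (∑ i, lam i ^ 2 - (∑ i, lam i) ^ 2 / ((n : ℝ) + 2)) := by
  intro Sigma SigmaTilde h
  have e1 := QFE.quad_Sigma (n := n) R lam c (ne_of_gt hc) hR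
  have e2 := QFE.quad_SigmaTilde (n := n) lam c (ne_of_gt hc)
  exact ⟨e1.trans e2.symm, e2⟩
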